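/- If a free filter F on ℕ is super-diagonal (every F-stationary set contains an F-stationary subset all of whose infinite subsets are F-stationary), then F is diagonal: for every sequence (A_n) in F and every F-stationary set I there is an F-stationary J ⊆ I with J \ A_n finite for all n. -/
import Mathlib


/-- A filter on ℕ, as a family of subsets: nonempty (contains `univ`), not containing `∅`,
closed under finite intersections and supersets. -/
def IsSetFilter (F : Set (Set ℕ)) : Prop :=
  Set.univ ∈ F ∧ ∅ ∉ F ∧ (∀ A ∈ F, ∀ B ∈ F, A ∩ B ∈ F) ∧ ∀ A ∈ F, ∀ B : Set ℕ, A ⊆ B → B ∈ F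

/-- A filter is free if its dual ideal contains all finite sets, i.e. the complement of
every finite set belongs to the filter. -/
def IsFreeSetFilter (F : Set (Set ℕ)) : Prop :=
  IsSetFilter F ∧ ∀ S : Set ℕ, S.Finite → Sᶜ ∈ F

/-- `H` is `F`-stationary iff it does not belong to the dual ideal of `F`,
i.e. `Hᶜ ∉ F`. -/
def FStationary (F : Set (Set ℕ)) (H : Set ℕ) : Prop := Hᶜ ∉ F

/-- The dual ideal of `F` is countably generated by the partition `A` of ℕ into
pairwise disjoint nonempty sets: it consists exactly of the finite unions of subsets
of the sets `A k`. -/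
def CountablyGeneratedBy (F : Set (Set ℕ)) (A : ℕ → Set ℕ) : Prop :=
  (∀ k, (A k).Nonempty) ∧ Pairwise (Function.onFun Disjoint A) ∧ (⋃ k, A k) = Set.univ ∧
    ∀ S : Set ℕ, Sᶜ ∈ F ↔ ∃ T : Finset ℕ, ∃ B : ℕ → Set ℕ,
      (∀ k ∈ T, B k ⊆ A k) ∧ S = ⋃ k ∈ T, B k

/-- `F` is super-diagonal: every stationary set has a stationary subset all of whose
infinite subsets are stationary. -/
def SuperDiagonal (F : Set (Set ℕ)) : Prop :=
  ∀ I : Set ℕ, FStationary F I →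
    ∃ J ⊆ I, FStationary F J ∧ ∀ K ⊆ J, K.Infinite → FStationary F K

/-- `F` is diagonal: for every sequence `(A n)` of members of `F` and every stationary
set `I` there exists a stationary `J ⊆ I` with `J \ A n` finite for all `n`. -/
def DiagonalFilter (F : Set (Set ℕ)) : Prop :=
  ∀ A : ℕ → Set ℕ, (∀ n, A n ∈ F) → ∀ I : Set ℕ, FStationary F I →
    ∃ J ⊆ I, FStationary F J ∧ ∀ n, (J \ A n).Finite

/-- `F` is block-respecting: for every stationary set `H` and every partition `(D k)`
of `H` into finite sets, there is a stationary `J ⊆ H` with `|J ∩ D k| ≤ 1` for all `k`. -/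
def BlockRespecting (F : Set (Set ℕ)) : Prop :=
  ∀ H : Set ℕ, FStationary F H → ∀ D : ℕ → Set ℕ, (∀ k, (D k).Finite) →
    Pairwise (Function.onFun Disjoint D) → (⋃ k, D k) = H →
    ∃ J ⊆ H, FStationary F J ∧ ∀ k, (J ∩ D k).Subsingleton

/-- a super-diagonal free filter is diagonal. -/
theorem stmt3 (F : Set (Set ℕ)) (hF : IsFreeSetFilter F) (hsd : SuperDiagonal F) :
    DiagonalFilter F := by
  intro A hA I hI
  obtain ⟨⟨huniv, hne, hinter, hsup⟩, hfree⟩ := hF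
  obtain ⟨J, hJI, hJs, hJinf⟩ := hsd I hI
  -- decreasing intersections
  set B : ℕ → Set ℕ := fun n => ⋂ k ∈ Finset.range (n + 1), A k with hBdef
  have hBF : ∀ n, B n ∈ F := by
    intro n
    induction n with
    | zero => simpa [hBdef] using hA 0
    | succ n ih =>
      have hEq : B (n + 1) = B n ∩ A (n + 1) := by
        ext x
        simp only [hBdef, Set.mem_iInter, Finset.mem_range, Set.mem_inter_iff]
        constructor
        · intro h
          exact ⟨fun k hk => h k (by omega), h (n + 1) (by omega)⟩
        · rintro ⟨h1, h2⟩ k hk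
          rcases Nat.lt_succ_iff_lt_or_eq.mp hk with h | h
          · exact h1 k h
          · subst h; exact h2
      rw [hEq]
      exact hinter _ ih _ (hA (n + 1))
  have hBmono : ∀ m n, m ≤ n → B n ⊆ B m := by
    intro m n hmn x hx
    simp only [hBdef, Set.mem_iInter] at hx ⊢
    intro k hk
    exact hx k (Finset.mem_range.2 (lt_of_lt_of_le (Finset.mem_range.1 hk) (by omega)))
  have hBA : ∀ n, B n ⊆ A n := by
    intro n x hx
    simp only [hBdef, Set.mem_iInter] at hx
    exact hx n (Finset.mem_range.2 (by omega))
  have hstat_inf : ∀ S : Set ℕ, FStationary F S → S.Infinite := by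
    intro S hS
    by_contra h
    exact hS (hfree S (Set.not_infinite.mp h))
  have hJB : ∀ n, (J ∩ B n).Infinite := by
    intro n
    apply hstat_inf
    intro hmem
    apply hJs
    have h2 : (J ∩ B n)ᶜ ∩ B n ∈ F := hinter _ hmem _ (hBF n)
    apply hsup _ h2
    rintro x ⟨hx1, hx2⟩
    intro hxJ
    exact hx1 ⟨hxJ, hx2⟩
  choose g hg1 hg2 using fun n (a : ℕ) => (hJB n).exists_gt a
  -- build strictly increasing sequence
  let f : ℕ → ℕ := fun n => Nat.rec (g 0 0) (fun n fn => g (n + 1) fn) n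
  have hf0 : f 0 = g 0 0 := rfl
  have hfs : ∀ n, f (n + 1) = g (n + 1) (f n) := fun n => rfl
  have hfmem : ∀ n, f n ∈ J ∩ B n := by
    intro n
    cases n with
    | zero => exact hg1 0 0
    | succ n => rw [hfs]; exact hg1 (n + 1) (f n)
  have hfmono : StrictMono f := by
    apply strictMono_nat_of_lt_succ
    intro n
    rw [hfs]
    exact hg2 (n + 1) (f n)
  refine ⟨Set.range f, ?_, ?_, ?_⟩
  · rintro x ⟨n, rfl⟩
    exact hJI (hfmem n).1
  · exact hJinf _ (fun x ⟨n, hn⟩ => hn ▸ (hfmem n).1)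
      (Set.infinite_range_of_injective hfmono.injective)
  · intro n
    apply Set.Finite.subset ((Set.finite_Iio n).image f)
    rintro x ⟨⟨m, rfl⟩, hxA⟩
    refine ⟨m, ?_, rfl⟩
    by_contra hmn
    exact hxA (hBA n (hBmono n m (by simpa using hmn) (hfmem m).2))
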